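/- Let g : \mathbb{R} \to \mathbb{R} be continuous with \int_{\mathbb{R}} |g(x)|(x^2+|x|+1)\,dx < \infty and suppose |g(x)| x^4 is bounded. Then for sequences K_n \to \infty, l_n/\sqrt{K_n} \to \infty, m_n/\sqrt{K_n} \to \infty of positive reals (with l_n, m_n integers), (1/\sqrt{K_n}) \sum_{i=-l_n}^{m_n} g(i/\sqrt{K_n}) \to \int_{\mathbb{R}} g(x)\,dx as n \to \infty. -/

import Mathlib

open Filter MeasureTheory

private lemma rsl_piece (g : ℝ → ℝ) (c : ℝ) (hc : 0 < c) (i : ℤ) :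
    Set.EqOn (fun x => g ((⌈x * c⌉ : ℝ) / c)) (fun _ => g ((i : ℝ) / c))
      (Set.Ioc (((i : ℝ) - 1) / c) ((i : ℝ) / c)) := by
  intro x hx
  have h1 : (i : ℝ) - 1 < x * c := by
    have := hx.1
    rw [div_lt_iff₀ hc] at this
    linarith
  have h2 : x * c ≤ (i : ℝ) := by
    have := hx.2
    rwa [le_div_iff₀ hc] at this
  have hceil : ⌈x * c⌉ = i := Int.ceil_eq_iff.2 ⟨h1, h2⟩
  simp [hceil]

private lemma rsl_piece_int (g : ℝ → ℝ) (c : ℝ) (hc : 0 < c) (i : ℤ) :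
    ∫ x in Set.Ioc (((i : ℝ) - 1) / c) ((i : ℝ) / c), g ((⌈x * c⌉ : ℝ) / c)
      = (1 / c) * g ((i : ℝ) / c) := by
  rw [setIntegral_congr_fun measurableSet_Ioc (rsl_piece g c hc i),
    setIntegral_const, Measure.real, Real.volume_Ioc, smul_eq_mul]
  congr 1
  have h : (i : ℝ) / c - ((i : ℝ) - 1) / c = 1 / c := by
    field_simp
    ring
  rw [h, ENNReal.toReal_ofReal (by positivity)]

private lemma rsl_piece_integrable (g : ℝ → ℝ) (c : ℝ) (hc : 0 < c) (i : ℤ) :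
    IntegrableOn (fun x => g ((⌈x * c⌉ : ℝ) / c))
      (Set.Ioc (((i : ℝ) - 1) / c) ((i : ℝ) / c)) := by
  have hconst : IntegrableOn (fun _ : ℝ => g ((i : ℝ) / c))
      (Set.Ioc (((i : ℝ) - 1) / c) ((i : ℝ) / c)) :=
    integrableOn_const measure_Ioc_lt_top.ne
  exact hconst.congr_fun (rsl_piece g c hc i).symm measurableSet_Ioc

private lemma rsl_sum_eq (g : ℝ → ℝ) (c : ℝ) (hc : 0 < c) (l m : ℕ) :
    (1 / c) * ∑ i ∈ Finset.Icc (-(l : ℤ)) (m : ℤ), g ((i : ℝ) / c)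
      = ∫ x in Set.Ioc ((-(l : ℝ) - 1) / c) ((m : ℝ) / c), g ((⌈x * c⌉ : ℝ) / c) := by
  set f : ℝ → ℝ := fun x => g ((⌈x * c⌉ : ℝ) / c) with hf
  set a : ℕ → ℝ := fun j => ((j : ℝ) - l - 1) / c with ha
  have hmono : ∀ k : ℕ, a k ≤ a (k + 1) := by
    intro k
    simp only [ha]
    have h : ((k : ℝ) - l - 1) ≤ (((k + 1 : ℕ) : ℝ) - l - 1) := by push_cast; linarith
    gcongr
  have hak : ∀ k : ℕ, a k = (((k : ℤ) - l : ℤ) : ℝ) / c - 1 / c := by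
    intro k; simp only [ha]; push_cast; ring
  have hik : ∀ k : ℕ, IntervalIntegrable f volume (a k) (a (k + 1)) := by
    intro k
    rw [intervalIntegrable_iff_integrableOn_Ioc_of_le (hmono k)]
    have h1 : a k = ((((k : ℤ) - l : ℤ) : ℝ) - 1) / c := by
      simp only [ha]; push_cast; ring_nf
    have h2 : a (k + 1) = (((k : ℤ) - l : ℤ) : ℝ) / c := by
      simp only [ha]; push_cast; ring_nf
    rw [h1, h2]
    exact rsl_piece_integrable g c hc _
  have key := intervalIntegral.sum_integral_adjacent_intervals
    (a := a) (n := l + m + 1) (μ := volume) (f := f) (fun k _ => hik k)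
  have hpieces : ∀ k : ℕ, (∫ x in a k..a (k + 1), f x) =
      (1 / c) * g ((((k : ℤ) - l : ℤ) : ℝ) / c) := by
    intro k
    rw [intervalIntegral.integral_of_le (hmono k)]
    have h1 : a k = ((((k : ℤ) - l : ℤ) : ℝ) - 1) / c := by
      simp only [ha]; push_cast; ring_nf
    have h2 : a (k + 1) = (((k : ℤ) - l : ℤ) : ℝ) / c := by
      simp only [ha]; push_cast; ring_nf
    rw [h1, h2]
    exact rsl_piece_int g c hc _
  have hsum : ∑ k ∈ Finset.range (l + m + 1), (∫ x in a k..a (k + 1), f x)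
      = (1 / c) * ∑ i ∈ Finset.Icc (-(l : ℤ)) (m : ℤ), g ((i : ℝ) / c) := by
    rw [Finset.mul_sum]
    rw [Finset.sum_congr rfl (fun k _ => hpieces k)]
    symm
    refine Finset.sum_nbij' (fun i => (i + l).toNat) (fun k => (k : ℤ) - l)
      ?_ ?_ ?_ ?_ ?_
    · intro i hi
      simp only [Finset.mem_Icc] at hi
      simp only [Finset.mem_range]
      omega
    · intro k hk
      simp only [Finset.mem_range] at hk
      simp only [Finset.mem_Icc]
      omega
    · intro i hi
      simp only [Finset.mem_Icc] at hi
      omega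
    · intro k hk
      simp only [Finset.mem_range] at hk
      omega
    · intro i hi
      simp only [Finset.mem_Icc] at hi
      have h : (((i + l).toNat : ℤ) - l) = i := by omega
      rw [h]
  have hends : (∫ x in (a 0)..(a (l + m + 1)), f x)
      = ∫ x in Set.Ioc ((-(l : ℝ) - 1) / c) ((m : ℝ) / c), f x := by
    have h0 : a 0 = (-(l : ℝ) - 1) / c := by simp [ha]
    have hN : a (l + m + 1) = (m : ℝ) / c := by
      simp only [ha]; push_cast; ring_nf
    have hle : a 0 ≤ a (l + m + 1) := by
      rw [h0, hN]
      have h : (-(l : ℝ) - 1) ≤ (m : ℝ) := by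
        have h1 : (0:ℝ) ≤ (l : ℝ) := Nat.cast_nonneg l
        have h2 : (0:ℝ) ≤ (m : ℝ) := Nat.cast_nonneg m
        linarith
      gcongr
    rw [intervalIntegral.integral_of_le hle, h0, hN]
  rw [← hsum, key, hends]

theorem riemann_sum_limit
    (g : ℝ → ℝ) (hg : Continuous g)
    (hint : MeasureTheory.Integrable (fun x => |g x| * (x ^ 2 + |x| + 1)))
    (hbdd : ∃ Mb : ℝ, ∀ x : ℝ, |g x| * x ^ 4 ≤ Mb)
    (K : ℕ → ℝ) (hKpos : ∀ n, 0 < K n) (l m : ℕ → ℕ)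
    (hK : Tendsto K atTop atTop)
    (hl : Tendsto (fun n => (l n : ℝ) / Real.sqrt (K n)) atTop atTop)
    (hm : Tendsto (fun n => (m n : ℝ) / Real.sqrt (K n)) atTop atTop) :
    Tendsto
      (fun n => (1 / Real.sqrt (K n)) *
        ∑ i ∈ Finset.Icc (-(l n : ℤ)) (m n : ℤ), g ((i : ℝ) / Real.sqrt (K n)))
      atTop (nhds (∫ x : ℝ, g x)) := by
  obtain ⟨Mb, hMb⟩ := hbdd
  set c : ℕ → ℝ := fun n => Real.sqrt (K n) with hcdef
  have hcpos : ∀ n, 0 < c n := fun n => Real.sqrt_pos.2 (hKpos n)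
  have hctop : Tendsto c atTop atTop := by
    rw [tendsto_atTop]
    intro b
    filter_upwards [hK.eventually_ge_atTop (b ^ 2)] with n hn
    calc b ≤ |b| := le_abs_self b
      _ = Real.sqrt (b ^ 2) := (Real.sqrt_sq_eq_abs b).symm
      _ ≤ Real.sqrt (K n) := Real.sqrt_le_sqrt hn
  -- bound on compact set
  obtain ⟨M₀, hM₀⟩ := (isCompact_Icc (a := (-3 : ℝ)) (b := 3)).exists_bound_of_continuousOn
    hg.continuousOn
  set C : ℝ := 17 * (max M₀ 0 + max Mb 0) with hCdef
  have hC0 : 0 ≤ C := by positivity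
  set bound : ℝ → ℝ := fun x => C / (1 + x ^ 4) with hbndef
  have hbound_nonneg : ∀ x, 0 ≤ bound x := fun x => div_nonneg hC0 (by positivity)
  set F : ℕ → ℝ → ℝ := fun n =>
    Set.indicator (Set.Ioc ((-(l n : ℝ) - 1) / c n) ((m n : ℝ) / c n))
      (fun x => g ((⌈x * c n⌉ : ℝ) / c n)) with hFdef
  have hmeas : ∀ n, Measurable (fun x : ℝ => g ((⌈x * c n⌉ : ℝ) / c n)) := by
    intro n
    have h1 : Measurable fun x : ℝ => ((⌈x * c n⌉ : ℤ) : ℝ) :=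
      (measurable_from_top).comp (Int.measurable_ceil.comp (measurable_id.mul_const (c n)))
    exact hg.measurable.comp (h1.div_const (c n))
  have hFeq : ∀ n, (1 / c n) *
      ∑ i ∈ Finset.Icc (-(l n : ℤ)) (m n : ℤ), g ((i : ℝ) / c n) = ∫ x, F n x := by
    intro n
    rw [rsl_sum_eq g (c n) (hcpos n) (l n) (m n)]
    simp only [hFdef]
    rw [integral_indicator measurableSet_Ioc]
  have main : Tendsto (fun n => ∫ x, F n x) atTop (nhds (∫ x : ℝ, g x)) := by
    apply tendsto_integral_filter_of_dominated_convergence bound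
    · filter_upwards with n
      exact ((hmeas n).indicator measurableSet_Ioc).aestronglyMeasurable
    · -- bound
      filter_upwards [hctop.eventually_ge_atTop 1] with n hn
      filter_upwards with x
      by_cases hx : x ∈ Set.Ioc ((-(l n : ℝ) - 1) / c n) ((m n : ℝ) / c n)
      · simp only [hFdef]
        rw [Set.indicator_of_mem hx]
        set y : ℝ := (⌈x * c n⌉ : ℝ) / c n with hy
        have hxy1 : x ≤ y := by
          rw [hy, le_div_iff₀ (hcpos n)]
          exact Int.le_ceil _
        have hxy2 : y ≤ x + 1 := by
          rw [hy, div_le_iff₀ (hcpos n)]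
          have h1 : (⌈x * c n⌉ : ℝ) < x * c n + 1 := Int.ceil_lt_add_one _
          have h2 : (1 : ℝ) ≤ c n := hn
          nlinarith
        rw [Real.norm_eq_abs]
        simp only [hbndef]
        have h4 : (0:ℝ) < 1 + x ^ 4 := by positivity
        by_cases hx2 : |x| ≤ 2
        · have hax := abs_le.1 hx2
          have hy3 : y ∈ Set.Icc (-3 : ℝ) 3 := ⟨by linarith [hax.1], by linarith [hax.2]⟩
          have hgy : |g y| ≤ M₀ := by
            have := hM₀ y hy3
            rwa [Real.norm_eq_abs] at this
          have hsq : x ^ 2 ≤ 4 := by nlinarith [sq_abs x, abs_nonneg x]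
          have hx4 : x ^ 4 ≤ 16 := by nlinarith [sq_nonneg x]
          have h17 : (1:ℝ) + x ^ 4 ≤ 17 := by linarith
          have hstep : C / 17 ≤ C / (1 + x ^ 4) := by gcongr
          calc |g y| ≤ M₀ := hgy
            _ ≤ max M₀ 0 + max Mb 0 := by
                linarith [le_max_left M₀ (0:ℝ), le_max_right Mb (0:ℝ)]
            _ = C / 17 := by rw [hCdef]; ring
            _ ≤ C / (1 + x ^ 4) := hstep
        · have hx2' : 2 < |x| := not_le.1 hx2
          have hyabs : |x| - 1 ≤ |y| := by
            rcases le_or_gt 0 x with hx0 | hx0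
            · have hy0 : 0 ≤ y := le_trans hx0 hxy1
              rw [abs_of_nonneg hx0, abs_of_nonneg hy0]
              linarith
            · have hxlt : x < -2 := by
                rw [abs_of_neg hx0] at hx2'
                linarith
              have hyneg : y < 0 := by linarith
              rw [abs_of_neg hx0, abs_of_neg hyneg]
              linarith
          have hy1 : (1:ℝ) ≤ |y| := by linarith
          have hy4pos : (0:ℝ) < y ^ 4 := by
            have : y ≠ 0 := by
              intro h
              rw [h, abs_zero] at hy1
              linarith
            positivity
          have hgy : |g y| ≤ Mb / y ^ 4 := by
            rw [le_div_iff₀ hy4pos]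
            exact hMb y
          have hxt : |x| ^ 4 = x ^ 4 := by
            rw [pow_abs, abs_of_nonneg (by positivity : (0:ℝ) ≤ x ^ 4)]
          have hyt : |y| ^ 4 = y ^ 4 := by
            rw [pow_abs, abs_of_nonneg (by positivity : (0:ℝ) ≤ y ^ 4)]
          have h2t : (0:ℝ) ≤ |x| - 2 := by linarith
          have h17t : 1 + |x| ^ 4 ≤ 17 * (|x| - 1) ^ 4 := by
            nlinarith [sq_nonneg (|x| - 2), sq_nonneg (|x| * (|x| - 2)),
              mul_nonneg h2t (sq_nonneg (|x| - 2)), mul_nonneg h2t h2t,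
              sq_nonneg |x|, h2t]
          have hu4 : (|x| - 1) ^ 4 ≤ |y| ^ 4 :=
            pow_le_pow_left₀ (by linarith) hyabs 4
          have hkey : Mb * (1 + x ^ 4) ≤ C * y ^ 4 := by
            have hMb' : Mb ≤ max Mb 0 := le_max_left _ _
            have hB0 : (0:ℝ) ≤ max Mb 0 := le_max_right _ _
            have hA0 : (0:ℝ) ≤ max M₀ 0 := le_max_right _ _
            calc Mb * (1 + x ^ 4) ≤ (max Mb 0) * (1 + x ^ 4) :=
                  mul_le_mul_of_nonneg_right hMb' (by positivity)
              _ = (max Mb 0) * (1 + |x| ^ 4) := by rw [hxt]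
              _ ≤ (max Mb 0) * (17 * (|x| - 1) ^ 4) :=
                  mul_le_mul_of_nonneg_left h17t hB0
              _ = 17 * (max Mb 0) * (|x| - 1) ^ 4 := by ring
              _ ≤ 17 * (max M₀ 0 + max Mb 0) * (|x| - 1) ^ 4 := by
                  have hp : (0:ℝ) ≤ (|x| - 1) ^ 4 := by positivity
                  nlinarith
              _ = C * (|x| - 1) ^ 4 := by rw [hCdef]
              _ ≤ C * |y| ^ 4 := mul_le_mul_of_nonneg_left hu4 hC0
              _ = C * y ^ 4 := by rw [hyt]
          calc |g y| ≤ Mb / y ^ 4 := hgy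
            _ ≤ C / (1 + x ^ 4) := (div_le_div_iff₀ hy4pos h4).2 hkey
      · simp only [hFdef]
        rw [Set.indicator_of_notMem hx, norm_zero]
        exact hbound_nonneg x
    · -- integrability of bound
      have hb2 : Integrable (fun x : ℝ => 2 * C * (1 + x ^ 2)⁻¹) :=
        integrable_inv_one_add_sq.const_mul (2 * C)
      refine hb2.mono' ?_ ?_
      · exact ((continuous_const.div (continuous_const.add (continuous_pow 4))
          (fun x => show (1:ℝ) + x ^ 4 ≠ 0 by positivity))).aestronglyMeasurable
      · filter_upwards with x
        rw [Real.norm_eq_abs, abs_of_nonneg (hbound_nonneg x)]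
        simp only [hbndef]
        have h4 : (0:ℝ) < 1 + x ^ 4 := by positivity
        have h2 : (0:ℝ) < 1 + x ^ 2 := by positivity
        have key : C * (1 + x ^ 2) ≤ 2 * C * (1 + x ^ 4) := by
          nlinarith [mul_nonneg hC0 (sq_nonneg (x ^ 2 - 1)), mul_nonneg hC0 (sq_nonneg (x ^ 2))]
        calc C / (1 + x ^ 4) ≤ 2 * C / (1 + x ^ 2) := (div_le_div_iff₀ h4 h2).2 key
          _ = 2 * C * (1 + x ^ 2)⁻¹ := div_eq_mul_inv _ _
    · -- pointwise limit
      filter_upwards with x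
      have h1 : Tendsto (fun n => (⌈x * c n⌉ : ℝ) / c n) atTop (nhds x) := by
        have hlow : ∀ n, x ≤ (⌈x * c n⌉ : ℝ) / c n := by
          intro n
          rw [le_div_iff₀ (hcpos n)]
          exact Int.le_ceil _
        have hhigh : ∀ n, (⌈x * c n⌉ : ℝ) / c n ≤ x + (c n)⁻¹ := by
          intro n
          rw [div_le_iff₀ (hcpos n)]
          have h1 : (⌈x * c n⌉ : ℝ) < x * c n + 1 := Int.ceil_lt_add_one _
          have h2 : (0:ℝ) < c n := hcpos n
          rw [add_mul, inv_mul_cancel₀ h2.ne']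
          linarith
        have hup : Tendsto (fun n => x + (c n)⁻¹) atTop (nhds x) := by
          have := hctop.inv_tendsto_atTop
          simpa using tendsto_const_nhds.add this
        exact tendsto_of_tendsto_of_tendsto_of_le_of_le tendsto_const_nhds hup hlow hhigh
      have h2 : Tendsto (fun n => g ((⌈x * c n⌉ : ℝ) / c n)) atTop (nhds (g x)) :=
        (hg.tendsto x).comp h1
      apply h2.congr'
      have hev1 : ∀ᶠ n in atTop, (-(l n : ℝ) - 1) / c n < x := by
        filter_upwards [hl.eventually_gt_atTop (-x)] with n hn
        have : (-(l n : ℝ) - 1) / c n ≤ -((l n : ℝ) / c n) := by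
          rw [← neg_div]
          have hnum : (-(l n : ℝ) - 1) ≤ -(l n : ℝ) := by linarith
          have hcn := hcpos n
          gcongr
        calc (-(l n : ℝ) - 1) / c n ≤ -((l n : ℝ) / c n) := this
          _ < x := by linarith
      have hev2 : ∀ᶠ n in atTop, x ≤ (m n : ℝ) / c n := hm.eventually_ge_atTop x
      filter_upwards [hev1, hev2] with n h1 h2
      simp only [hFdef]
      rw [Set.indicator_of_mem (Set.mem_Ioc.2 ⟨h1, h2⟩)]
  refine main.congr ?_
  intro n
  exact (hFeq n).symm
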